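/- Define ȳ on [-1,1] by ȳ(x) = -(1/2)(x+1) + (1/2)(x+1)³ + (1/12)(1-x²)³ for -1 ≤ x ≤ 0 and ȳ(x) = -(1/2)(x-1) + (1/2)(x-1)³ + (1/12)(1-x²)³ for 0 ≤ x ≤ 1. Then ȳ ∈ C¹([-1,1]), ȳ(-1) = ȳ(1) = 0, ȳ'(x) ≤ 1 for all x ∈ [-1,1], and the set {x ∈ [-1,1] : ȳ'(x) = 1} = {0}. -/

import Mathlib

open Set

/-- The exact optimal state of Example 2.5 (Dirichlet case). -/
noncomputable def ybarD (x : ℝ) : ℝ :=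
  if x ≤ 0 then -(1/2)*(x+1) + (1/2)*(x+1)^3 + (1/12)*(1-x^2)^3
  else -(1/2)*(x-1) + (1/2)*(x-1)^3 + (1/12)*(1-x^2)^3

/-- Its derivative. -/
noncomputable def ybarD' (x : ℝ) : ℝ :=
  if x ≤ 0 then -(1/2) + (3/2)*(x+1)^2 - (1/2)*x*(1-x^2)^2
  else -(1/2) + (3/2)*(x-1)^2 - (1/2)*x*(1-x^2)^2

private lemma hasDerivAt_f1 (x : ℝ) :
    HasDerivAt (fun x : ℝ => -(1/2)*(x+1) + (1/2)*(x+1)^3 + (1/12)*(1-x^2)^3)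
      (-(1/2) + (3/2)*(x+1)^2 - (1/2)*x*(1-x^2)^2) x := by
  have h1 : HasDerivAt (fun x : ℝ => x + 1) 1 x := (hasDerivAt_id x).add_const 1
  have h2 := h1.pow 3
  have h3 : HasDerivAt (fun x : ℝ => 1 - x^2) (0 - 2*x^(2-1)) x :=
    (hasDerivAt_const x 1).sub (hasDerivAt_pow 2 x)
  have h4 := h3.pow 3
  have := ((h1.const_mul (-(1/2) : ℝ)).add (h2.const_mul (1/2))).add (h4.const_mul (1/12))
  convert this using 1
  · rfl
  · rfl
  · funext y
    simp only [Pi.add_apply, Pi.pow_apply]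
  · norm_num
    ring

private lemma hasDerivAt_f2 (x : ℝ) :
    HasDerivAt (fun x : ℝ => -(1/2)*(x-1) + (1/2)*(x-1)^3 + (1/12)*(1-x^2)^3)
      (-(1/2) + (3/2)*(x-1)^2 - (1/2)*x*(1-x^2)^2) x := by
  have h1 : HasDerivAt (fun x : ℝ => x - 1) 1 x := (hasDerivAt_id x).sub_const 1
  have h2 := h1.pow 3
  have h3 : HasDerivAt (fun x : ℝ => 1 - x^2) (0 - 2*x^(2-1)) x :=
    (hasDerivAt_const x 1).sub (hasDerivAt_pow 2 x)
  have h4 := h3.pow 3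
  have := ((h1.const_mul (-(1/2) : ℝ)).add (h2.const_mul (1/2))).add (h4.const_mul (1/12))
  convert this using 1
  · rfl
  · rfl
  · funext y
    simp only [Pi.add_apply, Pi.pow_apply]
  · norm_num
    ring

private lemma aux_A {x : ℝ} (h1 : -1 ≤ x) (h2 : x ≤ 1) :
    2 ≤ 3*(x+2) - (1-x^2)^2 := by
  have hx2 : x^2 ≤ 1 := by nlinarith
  have ht : (1-x^2)^2 ≤ 1 := by
    nlinarith [mul_nonneg (sub_nonneg.2 hx2) (sq_nonneg x), sq_nonneg x]
  linarith

/-- Example 2.5: `ȳ ∈ C¹([-1,1])`, `ȳ(-1) = ȳ(1) = 0`, `ȳ' ≤ 1` on `[-1,1]`,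
and the active set `{x ∈ [-1,1] : ȳ'(x) = 1}` is exactly `{0}`. -/
theorem example_dirichlet_exact_solution :
    (∀ x ∈ Set.Icc (-1:ℝ) 1, HasDerivAt ybarD (ybarD' x) x) ∧
    ContinuousOn ybarD' (Set.Icc (-1:ℝ) 1) ∧
    ybarD (-1) = 0 ∧ ybarD 1 = 0 ∧
    (∀ x ∈ Set.Icc (-1:ℝ) 1, ybarD' x ≤ 1) ∧
    {x ∈ Set.Icc (-1:ℝ) 1 | ybarD' x = 1} = {0} := by
  refine ⟨?_, ?_, ?_, ?_, ?_, ?_⟩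
  · -- differentiability
    intro x _
    rcases lt_trichotomy x 0 with hx | hx | hx
    · have heq : ybarD =ᶠ[nhds x]
          (fun x : ℝ => -(1/2)*(x+1) + (1/2)*(x+1)^3 + (1/12)*(1-x^2)^3) := by
        filter_upwards [Iio_mem_nhds hx] with y hy
        simp only [ybarD, if_pos (le_of_lt (Set.mem_Iio.mp hy))]
      have : HasDerivAt ybarD (-(1/2) + (3/2)*(x+1)^2 - (1/2)*x*(1-x^2)^2) x :=
        (hasDerivAt_f1 x).congr_of_eventuallyEq heq
      simpa only [ybarD', if_pos (le_of_lt hx)] using this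
    · subst hx
      have hL : HasDerivWithinAt ybarD 1 (Set.Iic (0:ℝ)) 0 := by
        have h := (hasDerivAt_f1 0).hasDerivWithinAt (s := Set.Iic (0:ℝ))
        have h1 : (-(1/2) + (3/2)*((0:ℝ)+1)^2 - (1/2)*0*(1-0^2)^2) = 1 := by norm_num
        rw [h1] at h
        refine h.congr (fun y hy => ?_) (by simp only [ybarD, if_pos le_rfl])
        simp only [ybarD, if_pos (Set.mem_Iic.mp hy)]
      have hR : HasDerivWithinAt ybarD 1 (Set.Ici (0:ℝ)) 0 := by
        have h := (hasDerivAt_f2 0).hasDerivWithinAt (s := Set.Ici (0:ℝ))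
        have h1 : (-(1/2) + (3/2)*((0:ℝ)-1)^2 - (1/2)*0*(1-0^2)^2) = 1 := by norm_num
        rw [h1] at h
        refine h.congr (fun y hy => ?_) ?_
        · rcases lt_or_eq_of_le (Set.mem_Ici.mp hy) with hlt | heq0
          · simp only [ybarD, if_neg (not_le.mpr hlt)]
          · rw [← heq0]
            simp only [ybarD, if_pos le_rfl]
            norm_num
        · simp only [ybarD, if_pos le_rfl]
          norm_num
      have h := hL.union hR
      rw [Iic_union_Ici] at h
      have h0 : ybarD' 0 = 1 := by
        simp only [ybarD', if_pos le_rfl]; norm_num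
      rw [h0]
      exact hasDerivWithinAt_univ.mp h
    · have heq : ybarD =ᶠ[nhds x]
          (fun x : ℝ => -(1/2)*(x-1) + (1/2)*(x-1)^3 + (1/12)*(1-x^2)^3) := by
        filter_upwards [Ioi_mem_nhds hx] with y hy
        simp only [ybarD, if_neg (not_le.mpr (Set.mem_Ioi.mp hy))]
      have : HasDerivAt ybarD (-(1/2) + (3/2)*(x-1)^2 - (1/2)*x*(1-x^2)^2) x :=
        (hasDerivAt_f2 x).congr_of_eventuallyEq heq
      simpa only [ybarD', if_neg (not_le.mpr hx)] using this
  · -- continuity of derivative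
    have : Continuous ybarD' := by
      unfold ybarD'
      apply Continuous.if_le (by continuity) (by continuity) continuous_id continuous_const
      intro x hx
      simp only [id] at hx
      subst hx
      ring
    exact this.continuousOn
  · simp only [ybarD, if_pos (by norm_num : (-1:ℝ) ≤ 0)]; norm_num
  · simp only [ybarD, if_neg (by norm_num : ¬(1:ℝ) ≤ 0)]; norm_num
  · intro x hx
    obtain ⟨h1, h2⟩ := hx
    by_cases h : x ≤ 0
    · simp only [ybarD', if_pos h]
      have hA := aux_A h1 h2
      have key := mul_nonneg (neg_nonneg.mpr h) (by linarith : (0:ℝ) ≤ 3*(x+2) - (1-x^2)^2)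
      nlinarith [key]
    · push_neg at h
      simp only [ybarD', if_neg (not_le.mpr h)]
      nlinarith [mul_nonneg h.le (sq_nonneg (1-x^2)), mul_pos h (by linarith : (0:ℝ) < 2 - x)]
  · ext x
    simp only [Set.mem_setOf_eq, Set.mem_singleton_iff, Set.mem_Icc]
    constructor
    · rintro ⟨⟨h1, h2⟩, heq⟩
      by_contra hne
      by_cases h : x ≤ 0
      · have hx : x < 0 := lt_of_le_of_ne h hne
        simp only [ybarD', if_pos h] at heq
        have hA := aux_A h1 h2
        have key := mul_pos (neg_pos.mpr hx) (by linarith : (0:ℝ) < 3*(x+2) - (1-x^2)^2)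
        nlinarith [key]
      · push_neg at h
        simp only [ybarD', if_neg (not_le.mpr h)] at heq
        nlinarith [mul_nonneg h.le (sq_nonneg (1-x^2)), mul_pos h (by linarith : (0:ℝ) < 2 - x)]
    · rintro rfl
      refine ⟨⟨by norm_num, by norm_num⟩, ?_⟩
      simp only [ybarD', if_pos le_rfl]; norm_num
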